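/- Let K ≥ 1, let ρ ∈ (0, K] with ρ ≠ K/2, let φ be a strictly decreasing function on the positive integers with φ(N) → 0, and let X be a (ρ,φ)-regular configuration. Let N be a positive integer with φ(N) < |K/2 − ρ| and let t be an integer with 4t ≥ (N+1)². Put Y = T^t X. Then the average velocity of Y is well defined and equals min{1, K/ρ − 1}; that is, the limit lim_{n→∞} (Σ_{x=−n}^{n−1} min(Y(x), K−Y(x+1))) / (Σ_{x=−n}^{n−1} Y(x)) exists and equals min{1, K/ρ − 1}. -/

import Mathlib

/-- A configuration on the `K`-lane road: at most `K` particles per site. -/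
def IsConf (K : ℤ) (X : ℤ → ℤ) : Prop := ∀ x, 0 ≤ X x ∧ X x ≤ K

/-- The traffic map `T`. -/
def Tmap (K : ℤ) (X : ℤ → ℤ) : ℤ → ℤ := fun x =>
  X x + min (X (x - 1)) (K - X x) - min (X x) (K - X (x + 1))

/-- A configuration is free if `X(x) + X(x+1) ≤ K` for all `x`. -/
def IsFree (K : ℤ) (X : ℤ → ℤ) : Prop := ∀ x, X x + X (x + 1) ≤ K

/-- The number of particles `m(X,a,b) = Σ_{x=a}^{b} X(x)`. -/
noncomputable def msum (X : ℤ → ℤ) (a b : ℤ) : ℤ := ∑ x ∈ Finset.Icc a b, X x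

/-- `X` is `(ρ,φ)`-regular: every window of length `N` has particle density
within `φ(N)` of `ρ`. -/
def IsRegularConf (ρ : ℝ) (φ : ℕ → ℝ) (X : ℤ → ℤ) : Prop :=
  ∀ (n : ℤ) (N : ℕ), 1 ≤ N → |(msum X (n + 1) (n + N) : ℝ) / N - ρ| ≤ φ N

/-! ### Auxiliary development -/

lemma msum_empty (X : ℤ → ℤ) {a b : ℤ} (h : b < a) : msum X a b = 0 := by
  unfold msum
  rw [Finset.Icc_eq_empty (by omega), Finset.sum_empty]

lemma msum_succ (X : ℤ → ℤ) {a b : ℤ} (h : a ≤ b + 1) :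
    msum X a (b + 1) = msum X a b + X (b + 1) := by
  unfold msum
  have : Finset.Icc a (b+1) = insert (b+1) (Finset.Icc a b) := by
    ext z; simp only [Finset.mem_Icc, Finset.mem_insert]; omega
  rw [this, Finset.sum_insert (by simp only [Finset.mem_Icc]; omega)]
  ring

/-- Cumulative height function. -/
noncomputable def Ucum (X : ℤ → ℤ) (y : ℤ) : ℤ := msum X 1 y - msum X (y + 1) 0

lemma Ucum_succ (X : ℤ → ℤ) (y : ℤ) : Ucum X (y + 1) = Ucum X y + X (y + 1) := by
  unfold Ucum
  rcases le_or_gt 0 y with h | h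
  · rw [msum_succ X (by omega), msum_empty X (a := y + 1 + 1) (by omega),
      msum_empty X (a := y + 1) (by omega)]
    ring
  · rw [msum_empty X (a := 1) (b := y + 1) (by omega), msum_empty X (a := 1) (b := y) (by omega)]
    have : msum X (y + 1) 0 = msum X (y + 1 + 1) 0 + X (y + 1) := by
      rcases le_or_gt (y + 1 + 1) 0 with h2 | h2
      · have : Finset.Icc (y+1) (0:ℤ) = insert (y+1) (Finset.Icc (y+1+1) 0) := by
          ext z; simp only [Finset.mem_Icc, Finset.mem_insert]; omega
        unfold msum
        rw [this, Finset.sum_insert (by simp only [Finset.mem_Icc]; omega)]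
        ring
      · have hy : y = -1 := by omega
        subst hy
        norm_num
        rw [msum_empty X (a := (1:ℤ)) (by omega)]
        simp [msum]
    omega

lemma Ucum_diff (X : ℤ → ℤ) (n : ℤ) (N : ℕ) :
    Ucum X (n + N) - Ucum X n = msum X (n + 1) (n + N) := by
  induction N with
  | zero => simp [msum_empty X (by omega : (n:ℤ) < n + 1)]
  | succ m ih =>
    have h1 : (n + (↑(m+1)) : ℤ) = (n + m) + 1 := by push_cast; ring
    rw [h1, Ucum_succ, msum_succ X (by omega)]
    omega

/-- The cumulative flux, defined by the min-plus (ultradiscrete Burgers) recursion. -/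
def Fl (K : ℤ) (X : ℤ → ℤ) : ℕ → ℤ → ℤ
  | 0 => fun _ => 0
  | t + 1 => fun x => min (Fl K X t (x - 1) + X x) (Fl K X t (x + 1) + K - X (x + 1))

lemma Fl_succ (K : ℤ) (X : ℤ → ℤ) (t : ℕ) (x : ℤ) :
    Fl K X (t + 1) x = min (Fl K X t (x - 1) + X x) (Fl K X t (x + 1) + K - X (x + 1)) := rfl

lemma Fl_nonneg (K : ℤ) (X : ℤ → ℤ) (hX : IsConf K X) (t : ℕ) (x : ℤ) :
    0 ≤ Fl K X t x := by
  induction t generalizing x with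
  | zero => simp [Fl]
  | succ m ih =>
    rw [Fl_succ]
    have h1 := ih (x - 1); have h2 := ih (x + 1)
    have h3 := hX x; have h4 := hX (x + 1)
    omega

lemma Fl_le (K : ℤ) (X : ℤ → ℤ) (hX : IsConf K X) (t : ℕ) (x : ℤ) :
    Fl K X t x ≤ t * K := by
  induction t generalizing x with
  | zero => simp [Fl]
  | succ m ih =>
    rw [Fl_succ]
    have h1 := ih (x - 1)
    have h3 := hX x
    have : ((m : ℤ) + 1) * K = m * K + K := by ring
    push_cast
    omega

/-- Conservation of particles. -/
lemma conservation (K : ℤ) (X : ℤ → ℤ) (t : ℕ) (x : ℤ) :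
    (Tmap K)^[t] X x = X x + Fl K X t (x - 1) - Fl K X t x := by
  induction t generalizing x with
  | zero => simp [Fl]
  | succ m ih =>
    rw [Function.iterate_succ_apply']
    show (Tmap K)^[m] X x + min ((Tmap K)^[m] X (x-1)) (K - (Tmap K)^[m] X x)
        - min ((Tmap K)^[m] X x) (K - (Tmap K)^[m] X (x+1))
        = X x + Fl K X (m+1) (x - 1) - Fl K X (m+1) x
    have i0 := ih x
    have i1 := ih (x - 1)
    have i2 := ih (x + 1)
    have f0 := Fl_succ K X m x
    have f1 := Fl_succ K X m (x - 1)
    have e1 : x - 1 - 1 = x - 2 := by ring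
    have e2 : x - 1 + 1 = x := by ring
    rw [e1, e2] at f1
    rw [e1] at i1
    have e3 : x + 1 - 1 = x := by ring
    rw [e3] at i2
    rw [i0, i1, i2, f0, f1]
    omega

lemma sum_telescope_Icc (g : ℤ → ℤ) (a : ℤ) :
    ∀ b, a ≤ b → ∑ x ∈ Finset.Icc a b, (g (x - 1) - g x) = g (a - 1) - g b := by
  refine Int.le_induction ?_ ?_
  · simp
  · intro b hb ih
    have : Finset.Icc a (b + 1) = insert (b + 1) (Finset.Icc a b) := by
      ext z; simp only [Finset.mem_Icc, Finset.mem_insert]; omega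
    rw [this, Finset.sum_insert (by simp only [Finset.mem_Icc]; omega), ih,
      show b + 1 - 1 = b by ring]
    omega

/-- The particle count after `t` steps, in terms of the flux. -/
lemma msum_iter (K : ℤ) (X : ℤ → ℤ) (t : ℕ) {a b : ℤ} (hab : a ≤ b) :
    msum ((Tmap K)^[t] X) a b = msum X a b + Fl K X t (a - 1) - Fl K X t b := by
  have : msum ((Tmap K)^[t] X) a b
      = ∑ x ∈ Finset.Icc a b, (X x + (Fl K X t (x - 1) - Fl K X t x)) := by
    unfold msum
    refine Finset.sum_congr rfl fun x _ => ?_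
    have := conservation K X t x
    omega
  rw [this, Finset.sum_add_distrib, sum_telescope_Icc (Fl K X t) a b hab]
  unfold msum
  ring

/-- The set of admissible endpoints for Lax–Oleinik paths. -/
noncomputable def SS (t : ℕ) (x : ℤ) : Finset ℤ :=
  (Finset.Icc (x - t) (x + t)).filter fun y => (x + t - y) % 2 = 0

lemma SS_nonempty (t : ℕ) (x : ℤ) : (SS t x).Nonempty := by
  refine ⟨x - t, ?_⟩
  simp only [SS, Finset.mem_filter, Finset.mem_Icc]
  omega

lemma mem_SS {t : ℕ} {x y : ℤ} :
    y ∈ SS t x ↔ x - t ≤ y ∧ y ≤ x + t ∧ (x + t - y) % 2 = 0 := by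
  simp only [SS, Finset.mem_filter, Finset.mem_Icc]; tauto

/-- The max in the variational (Lax–Oleinik) formula. -/
noncomputable def MM (K : ℤ) (X : ℤ → ℤ) (t : ℕ) (x : ℤ) : ℤ :=
  (SS t x).sup' (SS_nonempty t x) (fun y => 2 * Ucum X y - K * y)

lemma SS_union (t : ℕ) (x : ℤ) : SS (t + 1) x = SS t (x - 1) ∪ SS t (x + 1) := by
  ext y
  simp only [Finset.mem_union, mem_SS]
  push_cast
  omega

lemma MM_succ (K : ℤ) (X : ℤ → ℤ) (t : ℕ) (x : ℤ) :
    MM K X (t + 1) x = max (MM K X t (x - 1)) (MM K X t (x + 1)) := by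
  unfold MM
  rw [← Finset.sup'_union (SS_nonempty t (x-1)) (SS_nonempty t (x+1)) _]
  congr 1
  exact SS_union t x

/-- The variational formula for the flux. -/
lemma MM_form (K : ℤ) (X : ℤ → ℤ) (t : ℕ) (x : ℤ) :
    2 * Fl K X t x + MM K X t x = 2 * Ucum X x - K * (x - t) := by
  induction t generalizing x with
  | zero =>
    have : SS 0 x = {x} := by
      ext y; simp only [mem_SS, Finset.mem_singleton]; omega
    simp only [MM]
    rw [Finset.sup'_congr (SS_nonempty 0 x) this (fun y _ => rfl)]
    simp only [Finset.sup'_singleton, Fl]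
    push_cast
    ring
  | succ m ih =>
    have i1 := ih (x - 1)
    have i2 := ih (x + 1)
    have u1 := Ucum_succ X (x - 1)
    have u2 := Ucum_succ X x
    have e1 : x - 1 + 1 = x := by ring
    rw [e1] at u1
    rw [Fl_succ, MM_succ]
    push_cast at *
    have r1 : K * (x - 1 - (m:ℤ)) = K * (x - ((m:ℤ) + 1)) := by ring
    have r2 : K * (x + 1 - (m:ℤ)) = K * (x - ((m:ℤ) + 1)) + 2 * K := by ring
    omega

lemma hdec_free (K : ℤ) (X : ℤ → ℤ) (N : ℕ)
    (hwin : ∀ n : ℤ, 2 * msum X (n + 1) (n + N) < K * N) (z : ℤ) :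
    2 * Ucum X z - K * z ≤ 2 * Ucum X (z - 2 * N) - K * (z - 2 * N) := by
  have d1 := Ucum_diff X (z - N) N
  have d2 := Ucum_diff X (z - 2 * N) N
  have w1 := hwin (z - N)
  have w2 := hwin (z - 2 * N)
  have e1 : Ucum X (z - (N:ℤ) + N) = Ucum X z := by rw [show z - (N:ℤ) + N = z by ring]
  have e2 : Ucum X (z - 2 * (N:ℤ) + N) = Ucum X (z - N) := by
    rw [show z - 2 * (N:ℤ) + N = z - N by ring]
  have r : K * (z - 2 * (N:ℤ)) = K * z - 2 * (K * (N:ℤ)) := by ring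
  omega

lemma hinc_jam (K : ℤ) (X : ℤ → ℤ) (N : ℕ)
    (hwin : ∀ n : ℤ, K * N < 2 * msum X (n + 1) (n + N)) (z : ℤ) :
    2 * Ucum X z - K * z ≤ 2 * Ucum X (z + 2 * N) - K * (z + 2 * N) := by
  have d1 := Ucum_diff X z N
  have d2 := Ucum_diff X (z + N) N
  have w1 := hwin z
  have w2 := hwin (z + N)
  have e2 : Ucum X (z + (N:ℤ) + N) = Ucum X (z + 2 * N) := by
    rw [show z + (N:ℤ) + N = z + 2 * N by ring]
  have r : K * (z + 2 * (N:ℤ)) = K * z + 2 * (K * (N:ℤ)) := by ring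
  omega

lemma MM_step_free (K : ℤ) (X : ℤ → ℤ) (N t : ℕ) (hN : 1 ≤ N) (ht : N ≤ t)
    (hwin : ∀ n : ℤ, 2 * msum X (n + 1) (n + N) < K * N) (x : ℤ) :
    MM K X t (x + 1) ≤ MM K X t (x - 1) := by
  unfold MM
  apply Finset.sup'_le
  intro y hy
  rw [mem_SS] at hy
  by_cases hc : y ∈ SS t (x - 1)
  · exact Finset.le_sup' (fun y => 2 * Ucum X y - K * y) hc
  · rw [mem_SS] at hc
    have hy' : y = x + t + 1 := by omega
    have hmem : x + t + 1 - 2 * N ∈ SS t (x - 1) := by rw [mem_SS]; omega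
    have hle := Finset.le_sup' (fun y => 2 * Ucum X y - K * y) hmem
    have hd := hdec_free K X N hwin (x + t + 1)
    subst hy'
    omega

lemma MM_step_jam (K : ℤ) (X : ℤ → ℤ) (N t : ℕ) (hN : 1 ≤ N) (ht : N ≤ t)
    (hwin : ∀ n : ℤ, K * N < 2 * msum X (n + 1) (n + N)) (x : ℤ) :
    MM K X t (x - 1) ≤ MM K X t (x + 1) := by
  unfold MM
  apply Finset.sup'_le
  intro y hy
  rw [mem_SS] at hy
  by_cases hc : y ∈ SS t (x + 1)
  · exact Finset.le_sup' (fun y => 2 * Ucum X y - K * y) hc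
  · rw [mem_SS] at hc
    have hy' : y = x - t - 1 := by omega
    have hmem : x - t - 1 + 2 * N ∈ SS t (x + 1) := by rw [mem_SS]; omega
    have hle := Finset.le_sup' (fun y => 2 * Ucum X y - K * y) hmem
    have hd := hinc_jam K X N hwin (x - t - 1)
    subst hy'
    omega

/-- Subcritical density: after time `t ≥ N` the configuration is free. -/
lemma free_after (K : ℤ) (X : ℤ → ℤ) (N t : ℕ) (hN : 1 ≤ N) (ht : N ≤ t)
    (hwin : ∀ n : ℤ, 2 * msum X (n + 1) (n + N) < K * N) (x : ℤ) :
    (Tmap K)^[t] X x + (Tmap K)^[t] X (x + 1) ≤ K := by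
  have c1 := conservation K X t x
  have c2 := conservation K X t (x + 1)
  rw [show x + 1 - 1 = x by ring] at c2
  have m1 := MM_form K X t (x - 1)
  have m2 := MM_form K X t (x + 1)
  have hM := MM_step_free K X N t hN ht hwin x
  have u1 := Ucum_succ X (x - 1)
  rw [show x - 1 + 1 = x by ring] at u1
  have u2 := Ucum_succ X x
  have r : K * (x + 1 - (t:ℤ)) = K * (x - 1 - (t:ℤ)) + 2 * K := by ring
  omega

/-- Supercritical density: after time `t ≥ N` the configuration is jammed. -/
lemma jam_after (K : ℤ) (X : ℤ → ℤ) (N t : ℕ) (hN : 1 ≤ N) (ht : N ≤ t)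
    (hwin : ∀ n : ℤ, K * N < 2 * msum X (n + 1) (n + N)) (x : ℤ) :
    K ≤ (Tmap K)^[t] X x + (Tmap K)^[t] X (x + 1) := by
  have c1 := conservation K X t x
  have c2 := conservation K X t (x + 1)
  rw [show x + 1 - 1 = x by ring] at c2
  have m1 := MM_form K X t (x - 1)
  have m2 := MM_form K X t (x + 1)
  have hM := MM_step_jam K X N t hN ht hwin x
  have u1 := Ucum_succ X (x - 1)
  rw [show x - 1 + 1 = x by ring] at u1
  have u2 := Ucum_succ X x
  have r : K * (x + 1 - (t:ℤ)) = K * (x - 1 - (t:ℤ)) + 2 * K := by ring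
  omega

/-- After the transient period, the average velocity of a regular configuration
of density `ρ ≠ K/2` is well defined and equals `min{1, K/ρ - 1}`. -/
theorem stmt_11 (K : ℤ) (hK : 1 ≤ K) (X : ℤ → ℤ) (hX : IsConf K X)
    (ρ : ℝ) (hρ0 : 0 < ρ) (hρK : ρ ≤ K) (hρhalf : ρ ≠ K / 2) (φ : ℕ → ℝ)
    (hφanti : StrictAntiOn φ (Set.Ici 1))
    (hφ0 : Filter.Tendsto φ Filter.atTop (nhds 0))
    (hreg : IsRegularConf ρ φ X)
    (N : ℕ) (hN : 1 ≤ N) (hNφ : φ N < |(K : ℝ) / 2 - ρ|)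
    (t : ℕ) (ht : (N + 1) ^ 2 ≤ 4 * t)
    (Y : ℤ → ℤ) (hY : Y = (Tmap K)^[t] X) :
    Filter.Tendsto
      (fun n : ℕ =>
        ((∑ x ∈ Finset.Icc (-(n : ℤ)) ((n : ℤ) - 1),
            min (Y x) (K - Y (x + 1)) : ℤ) : ℝ) /
        ((∑ x ∈ Finset.Icc (-(n : ℤ)) ((n : ℤ) - 1), Y x : ℤ) : ℝ))
      Filter.atTop (nhds (min 1 ((K : ℝ) / ρ - 1))) := by
  -- `t ≥ N`
  have htN : N ≤ t := by nlinarith [sq_nonneg ((N : ℤ) - 1)]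
  -- helper: `2n → ∞`
  have h2n : Filter.Tendsto (fun n : ℕ => 2 * n) Filter.atTop Filter.atTop :=
    Filter.tendsto_atTop_mono (fun n => by simp only [id_eq]; omega) Filter.tendsto_id
  have hgoal0 : Filter.Tendsto (fun n : ℕ => φ (2 * n) + ((t : ℝ) * K) / (2 * n))
      Filter.atTop (nhds 0) := by
    have h1 : Filter.Tendsto (fun n : ℕ => φ (2 * n)) Filter.atTop (nhds 0) :=
      hφ0.comp h2n
    have h2 : Filter.Tendsto (fun n : ℕ => ((t : ℝ) * K) / (2 * n))
        Filter.atTop (nhds 0) := by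
      have heq : (fun n : ℕ => ((t : ℝ) * K) / (2 * n))
          = fun n : ℕ => ((t : ℝ) * K / 2) / n := by
        funext n
        rw [div_div]
      rw [heq]
      exact tendsto_const_div_atTop_nhds_zero_nat _
    simpa using h1.add h2
  -- window sums of `Y` of length `2n` have density tending to `ρ`
  have key : ∀ s : ℤ, Filter.Tendsto
      (fun n : ℕ => (msum Y (-(n : ℤ) + s) ((n : ℤ) - 1 + s) : ℝ) / (2 * n))
      Filter.atTop (nhds ρ) := by
    intro s
    have hbound : ∀ n : ℕ, 1 ≤ n →
        |(msum Y (-(n : ℤ) + s) ((n : ℤ) - 1 + s) : ℝ) / (2 * n) - ρ|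
          ≤ φ (2 * n) + ((t : ℝ) * K) / (2 * n) := by
      intro n hn
      have hn2 : (0 : ℝ) < 2 * n := by positivity
      have hr := hreg (-(n : ℤ) - 1 + s) (2 * n) (by omega)
      rw [show (-(n : ℤ) - 1 + s + 1) = -(n : ℤ) + s by ring,
        show (-(n : ℤ) - 1 + s + ((2 * n : ℕ) : ℤ)) = (n : ℤ) - 1 + s by push_cast; ring] at hr
      have hms := msum_iter K X t (a := -(n : ℤ) + s) (b := (n : ℤ) - 1 + s) (by omega)
      rw [← hY] at hms
      have hf1 := Fl_nonneg K X hX t (-(n : ℤ) + s - 1)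
      have hf2 := Fl_nonneg K X hX t ((n : ℤ) - 1 + s)
      have hg1 := Fl_le K X hX t (-(n : ℤ) + s - 1)
      have hg2 := Fl_le K X hX t ((n : ℤ) - 1 + s)
      have hZ : |msum Y (-(n : ℤ) + s) ((n : ℤ) - 1 + s)
          - msum X (-(n : ℤ) + s) ((n : ℤ) - 1 + s)| ≤ (t : ℤ) * K := by
        rw [abs_le]
        omega
      have habs : |(msum Y (-(n : ℤ) + s) ((n : ℤ) - 1 + s) : ℝ)
          - (msum X (-(n : ℤ) + s) ((n : ℤ) - 1 + s) : ℝ)| ≤ (t : ℝ) * K := by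
        exact_mod_cast hZ
      have hsplit : (msum Y (-(n : ℤ) + s) ((n : ℤ) - 1 + s) : ℝ) / (2 * n) - ρ
          = ((msum Y (-(n : ℤ) + s) ((n : ℤ) - 1 + s) : ℝ)
              - (msum X (-(n : ℤ) + s) ((n : ℤ) - 1 + s) : ℝ)) / (2 * n)
            + ((msum X (-(n : ℤ) + s) ((n : ℤ) - 1 + s) : ℝ) / ((2 * n : ℕ) : ℝ) - ρ) := by
        push_cast
        ring
      rw [hsplit]
      refine le_trans (abs_add_le _ _) ?_
      have h1 : |((msum Y (-(n : ℤ) + s) ((n : ℤ) - 1 + s) : ℝ)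
          - (msum X (-(n : ℤ) + s) ((n : ℤ) - 1 + s) : ℝ)) / (2 * n)|
          ≤ ((t : ℝ) * K) / (2 * n) := by
        rw [abs_div, abs_of_pos hn2]
        gcongr
      linarith [hr]
    have h0 : Filter.Tendsto
        (fun n : ℕ => (msum Y (-(n : ℤ) + s) ((n : ℤ) - 1 + s) : ℝ) / (2 * n) - ρ)
        Filter.atTop (nhds 0) := by
      apply squeeze_zero_norm' _ hgoal0
      filter_upwards [Filter.eventually_ge_atTop 1] with n hn
      simpa [Real.norm_eq_abs] using hbound n hn
    have := h0.add (tendsto_const_nhds (x := ρ))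
    simpa using this
  rcases lt_or_gt_of_ne hρhalf with hlt | hgt
  · -- subcritical: the configuration is free at time t, velocity 1
    rw [abs_of_pos (by linarith : (0:ℝ) < (K : ℝ) / 2 - ρ)] at hNφ
    have hNpos : (0 : ℝ) < (N : ℝ) := by exact_mod_cast hN
    have hwin : ∀ n : ℤ, 2 * msum X (n + 1) (n + N) < K * N := by
      intro n
      have hr := (abs_le.mp (hreg n N hN)).2
      have h1 : (msum X (n + 1) (n + N) : ℝ) / N < (K : ℝ) / 2 := by linarith
      have h2 : ((2 * msum X (n + 1) (n + N) : ℤ) : ℝ) < ((K * N : ℤ) : ℝ) := by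
        rw [div_lt_iff₀ hNpos] at h1
        push_cast
        linarith
      exact_mod_cast h2
    have hfree : ∀ x, Y x + Y (x + 1) ≤ K := by
      intro x
      rw [hY]
      exact free_after K X N t hN htN hwin x
    have hnum : ∀ n : ℕ, (∑ x ∈ Finset.Icc (-(n : ℤ)) ((n : ℤ) - 1),
        min (Y x) (K - Y (x + 1))) = ∑ x ∈ Finset.Icc (-(n : ℤ)) ((n : ℤ) - 1), Y x := by
      intro n
      refine Finset.sum_congr rfl fun x _ => ?_
      have := hfree x
      omega
    have hmin : min (1 : ℝ) ((K : ℝ) / ρ - 1) = 1 := by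
      refine min_eq_left ?_
      rw [le_sub_iff_add_le, le_div_iff₀ hρ0]
      linarith
    rw [hmin]
    have hA : Filter.Tendsto
        (fun n : ℕ => (msum Y (-(n : ℤ)) ((n : ℤ) - 1) : ℝ) / (2 * n))
        Filter.atTop (nhds ρ) := by simpa using key 0
    have hev1 : ∀ᶠ n : ℕ in Filter.atTop,
        ρ / 2 < (msum Y (-(n : ℤ)) ((n : ℤ) - 1) : ℝ) / (2 * n) :=
      hA.eventually (lt_mem_nhds (by linarith : ρ / 2 < ρ))
    have hEv : (fun n : ℕ =>
        ((∑ x ∈ Finset.Icc (-(n : ℤ)) ((n : ℤ) - 1), min (Y x) (K - Y (x + 1)) : ℤ) : ℝ) /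
        ((∑ x ∈ Finset.Icc (-(n : ℤ)) ((n : ℤ) - 1), Y x : ℤ) : ℝ))
        =ᶠ[Filter.atTop] (fun _ => (1 : ℝ)) := by
      filter_upwards [hev1, Filter.eventually_ge_atTop 1] with n h1 hn1
      have hn2 : (0 : ℝ) < 2 * n := by positivity
      have hpos : (0 : ℝ) < (msum Y (-(n : ℤ)) ((n : ℤ) - 1) : ℝ) := by
        by_contra hc
        push_neg at hc
        have : (msum Y (-(n : ℤ)) ((n : ℤ) - 1) : ℝ) / (2 * n) ≤ 0 :=
          div_nonpos_iff.mpr (Or.inr ⟨hc, le_of_lt hn2⟩)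
        linarith
      have : ((∑ x ∈ Finset.Icc (-(n : ℤ)) ((n : ℤ) - 1),
          min (Y x) (K - Y (x + 1)) : ℤ) : ℝ)
          = ((∑ x ∈ Finset.Icc (-(n : ℤ)) ((n : ℤ) - 1), Y x : ℤ) : ℝ) := by
        exact_mod_cast congrArg (fun z : ℤ => (z : ℝ)) (hnum n)
      rw [this]
      exact div_self (by
        have : ((∑ x ∈ Finset.Icc (-(n : ℤ)) ((n : ℤ) - 1), Y x : ℤ) : ℝ)
            = (msum Y (-(n : ℤ)) ((n : ℤ) - 1) : ℝ) := rfl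
        rw [this]
        exact ne_of_gt hpos)
    exact Filter.Tendsto.congr' hEv.symm tendsto_const_nhds
  · -- supercritical: the configuration is jammed at time t, velocity K/ρ - 1
    rw [abs_of_neg (by linarith : (K : ℝ) / 2 - ρ < 0), neg_sub] at hNφ
    have hNpos : (0 : ℝ) < (N : ℝ) := by exact_mod_cast hN
    have hwin : ∀ n : ℤ, K * N < 2 * msum X (n + 1) (n + N) := by
      intro n
      have hr := (abs_le.mp (hreg n N hN)).1
      have h1 : (K : ℝ) / 2 < (msum X (n + 1) (n + N) : ℝ) / N := by linarith
      have h2 : ((K * N : ℤ) : ℝ) < ((2 * msum X (n + 1) (n + N) : ℤ) : ℝ) := by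
        rw [lt_div_iff₀ hNpos] at h1
        push_cast
        linarith
      exact_mod_cast h2
    have hjam : ∀ x, K ≤ Y x + Y (x + 1) := by
      intro x
      rw [hY]
      exact jam_after K X N t hN htN hwin x
    -- numerator identity
    have hshift : ∀ n : ℕ, ∑ x ∈ Finset.Icc (-(n : ℤ)) ((n : ℤ) - 1), Y (x + 1)
        = msum Y (-(n : ℤ) + 1) ((n : ℤ)) := by
      intro n
      unfold msum
      have hmap : Finset.Icc (-(n : ℤ) + 1) ((n : ℤ))
          = (Finset.Icc (-(n : ℤ)) ((n : ℤ) - 1)).map (addRightEmbedding 1) := by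
        rw [Finset.map_add_right_Icc]
        congr 1
        ring
      rw [hmap, Finset.sum_map]
      simp only [addRightEmbedding_apply]
    have hnum : ∀ n : ℕ, (∑ x ∈ Finset.Icc (-(n : ℤ)) ((n : ℤ) - 1),
        min (Y x) (K - Y (x + 1)))
        = 2 * n * K - msum Y (-(n : ℤ) + 1) ((n : ℤ)) := by
      intro n
      have h1 : (∑ x ∈ Finset.Icc (-(n : ℤ)) ((n : ℤ) - 1), min (Y x) (K - Y (x + 1)))
          = ∑ x ∈ Finset.Icc (-(n : ℤ)) ((n : ℤ) - 1), (K - Y (x + 1)) := by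
        refine Finset.sum_congr rfl fun x _ => ?_
        have := hjam x
        omega
      rw [h1, Finset.sum_sub_distrib, hshift n, Finset.sum_const, Int.card_Icc]
      have : ((n : ℤ) - 1 + 1 - -(n : ℤ)).toNat = 2 * n := by omega
      rw [this]
      push_cast
      ring
    have hA : Filter.Tendsto
        (fun n : ℕ => (msum Y (-(n : ℤ)) ((n : ℤ) - 1) : ℝ) / (2 * n))
        Filter.atTop (nhds ρ) := by simpa using key 0
    have hB : Filter.Tendsto
        (fun n : ℕ => (msum Y (-(n : ℤ) + 1) ((n : ℤ)) : ℝ) / (2 * n))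
        Filter.atTop (nhds ρ) := by simpa using key 1
    have hq : Filter.Tendsto
        (fun n : ℕ => ((K : ℝ) - (msum Y (-(n : ℤ) + 1) ((n : ℤ)) : ℝ) / (2 * n))
          / ((msum Y (-(n : ℤ)) ((n : ℤ) - 1) : ℝ) / (2 * n)))
        Filter.atTop (nhds (((K : ℝ) - ρ) / ρ)) :=
      Filter.Tendsto.div (tendsto_const_nhds.sub hB) hA (ne_of_gt hρ0)
    have hval : ((K : ℝ) - ρ) / ρ = min 1 ((K : ℝ) / ρ - 1) := by
      have h1 : ((K : ℝ) - ρ) / ρ = (K : ℝ) / ρ - 1 := by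
        field_simp
      rw [h1]
      refine (min_eq_right ?_).symm
      rw [sub_le_iff_le_add, div_le_iff₀ hρ0]
      linarith
    rw [← hval]
    refine Filter.Tendsto.congr' ?_ hq
    filter_upwards [Filter.eventually_ge_atTop 1] with n hn1
    have hn2 : (0 : ℝ) < 2 * (n : ℝ) := by positivity
    have hnum' : ((∑ x ∈ Finset.Icc (-(n : ℤ)) ((n : ℤ) - 1),
        min (Y x) (K - Y (x + 1)) : ℤ) : ℝ)
        = 2 * (n : ℝ) * (K : ℝ) - (msum Y (-(n : ℤ) + 1) ((n : ℤ)) : ℝ) := by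
      have := congrArg (fun z : ℤ => (z : ℝ)) (hnum n)
      push_cast at this
      convert this using 2 <;> push_cast <;> ring
    have hden : ((∑ x ∈ Finset.Icc (-(n : ℤ)) ((n : ℤ) - 1), Y x : ℤ) : ℝ)
        = (msum Y (-(n : ℤ)) ((n : ℤ) - 1) : ℝ) := rfl
    rw [hnum', hden]
    rcases eq_or_ne ((msum Y (-(n : ℤ)) ((n : ℤ) - 1) : ℝ)) 0 with h0 | h0
    · rw [h0]
      simp
    · field_simp
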